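/- arXiv:2205.12145 — 2 statements merged into one kernel-verified Lean document; each statement's English description precedes it below -/
import Mathlib

section
/- The environment process is ergodic under Q: if A ⊆ Ω_𝔎 is measurable and R1_A = 1_A holds Q-almost everywhere (where 1_A is the indicator function of A), then Q(A) ∈ {0,1}. -/
open MeasureTheory Filter

noncomputable section

/-- The lattice `ℤ^d`. -/
abbrev ZLat (d : ℕ) := Fin d → ℤ

/-- The space of uniformly elliptic environments. -/
abbrev EnvSpace (d K : ℕ) := ZLat d → (Set.Icc (2:ℤ) (K:ℤ) × Set.Icc (2:ℤ) (K:ℤ))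

/-- The shift `T j`. -/
def shiftT {d K : ℕ} (j : ZLat d) (e : EnvSpace d K) : EnvSpace d K := fun i => e (i + j)

/-- Size of the active population at `i`, as a real number. -/
def Nsize {d K : ℕ} (e : EnvSpace d K) (i : ZLat d) : ℝ := ((e i).1 : ℤ)

/-- Size of the dormant population at `i`, as a real number. -/
def Msize {d K : ℕ} (e : EnvSpace d K) (i : ZLat d) : ℝ := ((e i).2 : ℤ)

/-- Total migration rate `c := Σ_{i ≠ 0} a(0,i)`. -/
def cRate {d : ℕ} (a : ZLat d → ZLat d → ℝ) : ℝ := ∑' i : ZLat d, if i = 0 then 0 else a 0 i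

/-- The probability `q_s` of becoming dormant. -/
def qs {d : ℕ} (a : ZLat d → ZLat d → ℝ) (lam : ℝ) (K : ℕ) : ℝ :=
  lam / (cRate a + lam + lam * K)

/-- The step distribution `p̂`. -/
def phat {d : ℕ} (a : ZLat d → ZLat d → ℝ) (lam : ℝ) (K : ℕ) (i : ZLat d) : ℝ :=
  if i = 0 then lam * K / (cRate a + lam * K) else a 0 i / (cRate a + lam * K)

/-- The wake-up probabilities `ω_e(i)`. -/
def omegaE {d K : ℕ} (a : ZLat d → ZLat d → ℝ) (lam : ℝ) (e : EnvSpace d K) (i : ZLat d) : ℝ :=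
  lam * Nsize e i / (Msize e i * (cRate a + lam + lam * K))

/-- `n`-fold convolution power of a function on `ℤ^d`. -/
def convPow {d : ℕ} (p : ZLat d → ℝ) : ℕ → ZLat d → ℝ
  | 0 => fun i => if i = 0 then 1 else 0
  | n + 1 => fun i => ∑' j : ZLat d, convPow p n j * p (i - j)

/-- The Markov operator `R` of the auxiliary environment process. -/
def Rop {d K : ℕ} (a : ZLat d → ZLat d → ℝ) (lam : ℝ)
    (f : EnvSpace d K × Bool → ℝ) : EnvSpace d K × Bool → ℝ := fun x =>
  match x with
  | (e, true) => qs a lam K * f (e, false)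
      + (1 - qs a lam K) * ∑' j : ZLat d, phat a lam K j * f (shiftT j e, true)
  | (e, false) => omegaE a lam e 0 * f (e, true) + (1 - omegaE a lam e 0) * f (e, false)

/-- The strip `G = ℤ^d × {0,1}`. -/
abbrev Gstrip (d : ℕ) := ZLat d × Bool

/-- One-step transition kernel of the subordinate Markov chain in environment `e`. -/
def QK {d K : ℕ} (a : ZLat d → ZLat d → ℝ) (lam : ℝ) (e : EnvSpace d K) :
    Gstrip d → Gstrip d → ℝ
  | (i, true), (j, true) => (1 - qs a lam K) * phat a lam K (j - i)
  | (i, true), (j, false) => if j = i then qs a lam K else 0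
  | (i, false), (j, true) => if j = i then omegaE a lam e i else 0
  | (i, false), (j, false) => if j = i then 1 - omegaE a lam e i else 0

/-- `n`-step transition kernel of the subordinate Markov chain. -/
def QKn {d K : ℕ} (a : ZLat d → ZLat d → ℝ) (lam : ℝ) (e : EnvSpace d K) :
    ℕ → Gstrip d → Gstrip d → ℝ
  | 0 => fun η ξ => if ξ = η then 1 else 0
  | n + 1 => fun η ξ => ∑' ζ : Gstrip d, QKn a lam e n η ζ * QK a lam e ζ ξ

/-- Time-`t` transition kernel of the single-particle dual (uniformization representation). -/
def ptk {d K : ℕ} (a : ZLat d → ZLat d → ℝ) (lam : ℝ) (e : EnvSpace d K) (t : ℝ)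
    (η ξ : Gstrip d) : ℝ :=
  Real.exp (-((cRate a + lam + lam * K) * t)) *
    ∑' n : ℕ, ((cRate a + lam + lam * K) * t) ^ n / (n.factorial : ℝ) * QKn a lam e n η ξ

end


section ErgHelpers
open MeasureTheory Filter
variable {d K : ℕ}

lemma Rop_false' {d K : ℕ} (a : ZLat d → ZLat d → ℝ) (lam : ℝ) (f : EnvSpace d K × Bool → ℝ)
    (e : EnvSpace d K) : Rop a lam f (e, false)
      = omegaE a lam e 0 * f (e, true) + (1 - omegaE a lam e 0) * f (e, false) := rfl

lemma Rop_true' {d K : ℕ} (a : ZLat d → ZLat d → ℝ) (lam : ℝ) (f : EnvSpace d K × Bool → ℝ)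
    (e : EnvSpace d K) : Rop a lam f (e, true) = qs a lam K * f (e, false)
      + (1 - qs a lam K) * ∑' j : ZLat d, phat a lam K j * f (shiftT j e, true) := rfl

lemma shiftT_comp (j k : ZLat d) (e : EnvSpace d K) :
    shiftT j (shiftT k e) = shiftT (j + k) e := by
  funext i; simp [shiftT, add_assoc]

lemma shiftT_zero (e : EnvSpace d K) : shiftT 0 e = e := by
  funext i; simp [shiftT]

lemma measurable_shiftT (j : ZLat d) : Measurable (shiftT (d := d) (K := K) j) :=
  measurable_pi_lambda _ (fun i => measurable_pi_apply (i + j))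

lemma convPow_nonneg {p : ZLat d → ℝ} (hp : ∀ i, 0 ≤ p i) :
    ∀ n i, 0 ≤ convPow p n i := by
  intro n
  induction n with
  | zero => intro i; unfold convPow; split <;> norm_num
  | succ n ih =>
    intro i
    exact tsum_nonneg fun j => mul_nonneg (ih j) (hp _)

lemma Nsize_ge (e : EnvSpace d K) (i : ZLat d) : (2:ℝ) ≤ Nsize e i := by
  have := (e i).1.2.1; unfold Nsize; exact_mod_cast this

lemma Nsize_le (e : EnvSpace d K) (i : ZLat d) : Nsize e i ≤ K := by
  have := (e i).1.2.2; unfold Nsize; exact_mod_cast this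

lemma Msize_ge (e : EnvSpace d K) (i : ZLat d) : (2:ℝ) ≤ Msize e i := by
  have := (e i).2.2.1; unfold Msize; exact_mod_cast this

lemma Msize_le (e : EnvSpace d K) (i : ZLat d) : Msize e i ≤ K := by
  have := (e i).2.2.2; unfold Msize; exact_mod_cast this

lemma measurable_ratio : Measurable (fun e : EnvSpace d K => Msize e 0 / Nsize e 0) := by
  unfold Msize Nsize
  fun_prop

lemma if_one_zero_eq_iff {P Q : Prop} [Decidable P] [Decidable Q]
    (h : (if P then (1:ℝ) else 0) = (if Q then 1 else 0)) : P ↔ Q := by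
  by_cases p : P <;> by_cases q : Q <;> simp [p, q] at h ⊢

/-- If `∑ p j * v j = c` with `v` taking values in `{0,1}`, `c ∈ {0,1}`, `p` a prob vector,
then `v j0 = c` whenever `p j0 > 0`. -/
lemma forced {p : ZLat d → ℝ} (hp : ∀ j, 0 ≤ p j) (hps : Summable p)
    (hp1 : ∑' j, p j = 1) {v : ZLat d → ℝ} (hv : ∀ j, v j = 0 ∨ v j = 1)
    {c : ℝ} (hc : c = 0 ∨ c = 1) (heq : ∑' j, p j * v j = c)
    {j0 : ZLat d} (hj0 : 0 < p j0) : v j0 = c := by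
  have hv01 : ∀ j, 0 ≤ v j ∧ v j ≤ 1 := by
    intro j; rcases hv j with h | h <;> simp [h]
  have hsum_pv : Summable (fun j => p j * v j) := by
    apply Summable.of_nonneg_of_le (fun j => mul_nonneg (hp j) (hv01 j).1)
      (fun j => ?_) hps
    calc p j * v j ≤ p j * 1 := mul_le_mul_of_nonneg_left (hv01 j).2 (hp j)
    _ = p j := mul_one _
  rcases hc with hc | hc
  · subst hc
    have h1 : p j0 * v j0 ≤ 0 := heq ▸ Summable.le_tsum hsum_pv j0
      (fun j _ => mul_nonneg (hp j) (hv01 j).1)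
    have h2 : 0 ≤ p j0 * v j0 := mul_nonneg (hp j0) (hv01 j0).1
    have : p j0 * v j0 = 0 := le_antisymm h1 h2
    rcases mul_eq_zero.mp this with h | h
    · exact absurd h (ne_of_gt hj0)
    · exact h
  · subst hc
    have hsum_w : Summable (fun j => p j * (1 - v j)) := by
      have := hps.sub hsum_pv
      exact this.congr fun j => by ring
    have htw : ∑' j, p j * (1 - v j) = 0 := by
      have := Summable.tsum_sub hps hsum_pv
      have h2 : ∑' j, p j * (1 - v j) = ∑' j, (p j - p j * v j) := by
        congr 1; funext j; ring
      rw [h2, this, hp1, heq, sub_self]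
    have h1 : p j0 * (1 - v j0) ≤ 0 := htw ▸ Summable.le_tsum hsum_w j0
      (fun j _ => mul_nonneg (hp j) (by linarith [(hv01 j).2]))
    have h2 : 0 ≤ p j0 * (1 - v j0) := mul_nonneg (hp j0) (by linarith [(hv01 j0).2])
    have : p j0 * (1 - v j0) = 0 := le_antisymm h1 h2
    rcases mul_eq_zero.mp this with h | h
    · exact absurd h (ne_of_gt hj0)
    · linarith

end ErgHelpers

/-- Ergodicity of the environment process under `Q`. -/
theorem ergodicity_of_environment_process
    (d K : ℕ) (hd : 1 ≤ d) (hK : 2 ≤ K)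
    (a : ZLat d → ZLat d → ℝ) (lam : ℝ) (hlam : 0 < lam)
    (ha_nonneg : ∀ i j, 0 ≤ a i j)
    (ha_transl : ∀ i j, a i j = a 0 (j - i))
    (ha_irr : ∀ i : ZLat d, ∃ n : ℕ, 0 < convPow (a 0) n i)
    (ha_sum : Summable (a 0))
    (ha00 : 0 < a 0 0)
    (Pbar : Measure (EnvSpace d K)) [IsProbabilityMeasure Pbar]
    (hPinv : ∀ (j : ZLat d) (A : Set (EnvSpace d K)), MeasurableSet A →
      Pbar (shiftT j ⁻¹' A) = Pbar A)
    (hPerg : ∀ A : Set (EnvSpace d K), MeasurableSet A →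
      (∀ j : ZLat d, shiftT j ⁻¹' A = A) → Pbar A = 0 ∨ Pbar A = 1)
    (Q : Measure (EnvSpace d K × Bool)) [IsProbabilityMeasure Q]
    (hQ1 : ∀ A : Set (EnvSpace d K), MeasurableSet A →
      Q (A ×ˢ ({true} : Set Bool)) =
        ENNReal.ofReal (1 / (1 + ∫ e', Msize e' 0 / Nsize e' 0 ∂Pbar)) * Pbar A)
    (hQ0 : ∀ A : Set (EnvSpace d K), MeasurableSet A →
      Q (A ×ˢ ({false} : Set Bool)) =
        ENNReal.ofReal ((1 / (1 + ∫ e', Msize e' 0 / Nsize e' 0 ∂Pbar)) *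
          ∫ e' in A, Msize e' 0 / Nsize e' 0 ∂Pbar))
    :
    ∀ A : Set (EnvSpace d K × Bool), MeasurableSet A →
      (∀ᵐ x ∂Q, Rop a lam (A.indicator fun _ => (1:ℝ)) x = A.indicator (fun _ => (1:ℝ)) x) →
      Q A = 0 ∨ Q A = 1 := by
  classical
  intro A hA hfix
  set f : EnvSpace d K × Bool → ℝ := A.indicator fun _ => (1:ℝ) with hf
  have hfval : ∀ x, f x = if x ∈ A then (1:ℝ) else 0 := fun x => Set.indicator_apply _ _ _
  -- basic positivity
  have hc0 : 0 ≤ cRate a := by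
    unfold cRate
    exact tsum_nonneg fun i => by by_cases h : i = 0 <;> simp [h, ha_nonneg 0 i]
  have hK0 : (0:ℝ) < K := by
    have : (2:ℝ) ≤ K := by exact_mod_cast hK
    linarith
  have hlamK : 0 < lam * K := mul_pos hlam hK0
  have hden2 : 0 < cRate a + lam * K := by linarith
  have hden : 0 < cRate a + lam + lam * K := by linarith
  -- facts about phat
  have hphat_eq : phat a lam K = fun i => (if i = 0 then lam * K else a 0 i) / (cRate a + lam * K) := by
    funext i; unfold phat; split <;> rfl
  have hsum_g : Summable (fun i : ZLat d => if i = 0 then lam * K else a 0 i) := by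
    have h1 : Summable (fun i : ZLat d => if i = 0 then lam * K - a 0 0 else 0) :=
      summable_of_ne_finset_zero (s := {0}) (by intro b hb; simp only [Finset.mem_singleton] at hb; simp [hb])
    have h2 := h1.add ha_sum
    convert h2 using 1
    funext i; by_cases h : i = 0 <;> simp [h]
  have hsum_phat : Summable (phat a lam K) := by
    rw [hphat_eq]; exact hsum_g.div_const _
  have hphat_nonneg : ∀ i, 0 ≤ phat a lam K i := by
    intro i; unfold phat; split
    · positivity
    · exact div_nonneg (ha_nonneg 0 i) hden2.le
  have htsum_g : ∑' i : ZLat d, (if i = 0 then lam * K else a 0 i) = lam * K + cRate a := by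
    rw [Summable.tsum_eq_add_tsum_ite hsum_g 0]
    simp only [if_pos rfl]
    congr 1
    unfold cRate
    congr 1; funext i; by_cases h : i = 0 <;> simp [h]
  have htsum_phat : ∑' i, phat a lam K i = 1 := by
    rw [hphat_eq, tsum_div_const, htsum_g]
    rw [div_eq_one_iff_eq (ne_of_gt hden2)]
    ring
  have hphat_pos : ∀ m, 0 < a 0 m → 0 < phat a lam K m := by
    intro m hm; unfold phat; split
    · positivity
    · exact div_pos hm hden2
  have homega_pos : ∀ e : EnvSpace d K, 0 < omegaE a lam e 0 := by
    intro e
    unfold omegaE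
    apply div_pos (mul_pos hlam (by linarith [Nsize_ge e 0]))
    exact mul_pos (by linarith [Msize_ge e 0]) hden
  have hqs_lt1 : qs a lam K < 1 := by
    unfold qs
    rw [div_lt_one hden]
    linarith
  -- the density ratio
  have hrho0 : 0 ≤ ∫ e', Msize e' 0 / Nsize e' 0 ∂Pbar :=
    integral_nonneg fun e => div_nonneg (by linarith [Msize_ge e 0]) (by linarith [Nsize_ge e 0])
  have hg_int : Integrable (fun e : EnvSpace d K => Msize e 0 / Nsize e 0) Pbar := by
    apply Integrable.mono' (integrable_const ((K:ℝ)/2)) measurable_ratio.aestronglyMeasurable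
    filter_upwards with e
    rw [Real.norm_eq_abs, abs_of_nonneg (div_nonneg (by linarith [Msize_ge e 0]) (by linarith [Nsize_ge e 0]))]
    rw [div_le_div_iff₀ (by linarith [Nsize_ge e 0]) two_pos]
    nlinarith [Msize_le e 0, Nsize_ge e 0]
  -- null-set transfer between Q and Pbar
  have htrue_null : ∀ S : Set (EnvSpace d K), MeasurableSet S →
      Q (S ×ˢ ({true} : Set Bool)) = 0 → Pbar S = 0 := by
    intro S hS h0
    rw [hQ1 S hS] at h0
    rcases mul_eq_zero.mp h0 with h | h
    · rw [ENNReal.ofReal_eq_zero] at h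
      have : (0:ℝ) < 1 / (1 + ∫ e', Msize e' 0 / Nsize e' 0 ∂Pbar) := by positivity
      linarith
    · exact h
  have hfalse_null : ∀ S : Set (EnvSpace d K), MeasurableSet S →
      Q (S ×ˢ ({false} : Set Bool)) = 0 → Pbar S = 0 := by
    intro S hS h0
    rw [hQ0 S hS, ENNReal.ofReal_eq_zero] at h0
    have hc1 : (0:ℝ) < 1 / (1 + ∫ e', Msize e' 0 / Nsize e' 0 ∂Pbar) := by positivity
    have hI0 : ∫ e' in S, Msize e' 0 / Nsize e' 0 ∂Pbar ≤ 0 := by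
      by_contra hI
      push_neg at hI
      nlinarith
    have hlow : (2 / (K:ℝ)) * (Pbar S).toReal ≤ ∫ e' in S, Msize e' 0 / Nsize e' 0 ∂Pbar := by
      rw [← measureReal_def]
      apply setIntegral_ge_of_const_le_real hS (measure_ne_top _ _) (fun e _ => ?_) hg_int.integrableOn
      rw [div_le_div_iff₀ hK0 (by linarith [Nsize_ge e 0])]
      nlinarith [Msize_ge e 0, Nsize_le e 0]
    have h2K : (0:ℝ) < 2 / (K:ℝ) := by positivity
    have htr : (Pbar S).toReal = 0 := by
      nlinarith [ENNReal.toReal_nonneg (a := Pbar S)]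
    rcases (ENNReal.toReal_eq_zero_iff _).mp htr with h | h
    · exact h
    · exact absurd h (measure_ne_top _ _)
  -- Q-a.e. statements restrict to Pbar-a.e. statements on each slice
  have hae_transfer : ∀ {P : EnvSpace d K × Bool → Prop}, (∀ᵐ x ∂Q, P x) →
      ((∀ᵐ e ∂Pbar, P (e, true)) ∧ (∀ᵐ e ∂Pbar, P (e, false))) := by
    intro P hP
    rw [ae_iff] at hP
    obtain ⟨N, hNsub, hNm, hN0⟩ := exists_measurable_superset_of_null hP
    constructor
    · have hm : MeasurableSet ((fun e : EnvSpace d K => (e, true)) ⁻¹' N) :=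
        hNm.preimage measurable_prodMk_right
      have h0 : Q (((fun e : EnvSpace d K => (e, true)) ⁻¹' N) ×ˢ ({true} : Set Bool)) = 0 := by
        refine le_antisymm (le_trans (measure_mono ?_) hN0.le) zero_le
        rintro ⟨e, b⟩ ⟨he, hb⟩
        simp only [Set.mem_singleton_iff] at hb
        subst hb; exact he
      have hnull := htrue_null _ hm h0
      rw [ae_iff]
      exact measure_mono_null (fun e he => hNsub he) hnull
    · have hm : MeasurableSet ((fun e : EnvSpace d K => (e, false)) ⁻¹' N) :=
        hNm.preimage measurable_prodMk_right
      have h0 : Q (((fun e : EnvSpace d K => (e, false)) ⁻¹' N) ×ˢ ({false} : Set Bool)) = 0 := by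
        refine le_antisymm (le_trans (measure_mono ?_) hN0.le) zero_le
        rintro ⟨e, b⟩ ⟨he, hb⟩
        simp only [Set.mem_singleton_iff] at hb
        subst hb; exact he
      have hnull := hfalse_null _ hm h0
      rw [ae_iff]
      exact measure_mono_null (fun e he => hNsub he) hnull
  obtain ⟨h_true, h_false⟩ := hae_transfer hfix
  -- the slices of A
  set A1 : Set (EnvSpace d K) := {e | (e, true) ∈ A} with hA1def
  set A0 : Set (EnvSpace d K) := {e | (e, false) ∈ A} with hA0def
  have hA1m : MeasurableSet A1 := hA.preimage measurable_prodMk_right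
  have hA0m : MeasurableSet A0 := hA.preimage measurable_prodMk_right
  have hf1 : ∀ e, f (e, true) = if e ∈ A1 then (1:ℝ) else 0 := fun e => hfval (e, true)
  have hf0 : ∀ e, f (e, false) = if e ∈ A0 then (1:ℝ) else 0 := fun e => hfval (e, false)
  -- step 1 : from the `false` slice, A0 = A1 a.e.
  have hA01 : ∀ᵐ e ∂Pbar, (e ∈ A0 ↔ e ∈ A1) := by
    filter_upwards [h_false] with e he
    rw [Rop_false'] at he
    have h2 : omegaE a lam e 0 * f (e, true) = omegaE a lam e 0 * f (e, false) := by
      linear_combination he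
    have hx := mul_left_cancel₀ (ne_of_gt (homega_pos e)) h2
    rw [hf1, hf0] at hx
    exact (if_one_zero_eq_iff hx).symm
  -- step 2 : from the `true` slice, the shift-average of the A1 indicator is itself
  have hS : ∀ᵐ e ∂Pbar,
      ∑' j : ZLat d, phat a lam K j * f (shiftT j e, true) = f (e, true) := by
    filter_upwards [h_true, hA01] with e he h01
    rw [Rop_true'] at he
    have hff : f (e, false) = f (e, true) := by
      rw [hf1, hf0]
      by_cases h : e ∈ A1 <;> simp [h, h01.mpr, fun hh => (h01.mp hh)] <;> tauto
    rw [hff] at he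
    have h2 : (1 - qs a lam K) * (∑' j : ZLat d, phat a lam K j * f (shiftT j e, true))
        = (1 - qs a lam K) * f (e, true) := by linear_combination he
    exact mul_left_cancel₀ (by linarith) h2
  -- step 3 : a.e. invariance under each shift with positive phat
  have hstep : ∀ j0 : ZLat d, 0 < phat a lam K j0 →
      ∀ᵐ e ∂Pbar, (shiftT j0 e ∈ A1 ↔ e ∈ A1) := by
    intro j0 hj0
    filter_upwards [hS] with e he
    have hv : ∀ j : ZLat d, f (shiftT j e, true) = 0 ∨ f (shiftT j e, true) = 1 := by
      intro j; rw [hf1]; by_cases h : shiftT j e ∈ A1 <;> simp [h]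
    have hc : f (e, true) = 0 ∨ f (e, true) = 1 := by
      rw [hf1]; by_cases h : e ∈ A1 <;> simp [h]
    have := forced hphat_nonneg hsum_phat htsum_phat hv hc he hj0
    rw [hf1, hf1] at this
    exact if_one_zero_eq_iff this
  -- measure preservation of shifts
  have hMP : ∀ j : ZLat d, MeasurePreserving (shiftT (K := K) j) Pbar Pbar := fun j =>
    ⟨measurable_shiftT j, Measure.ext fun s hs => by
      rw [Measure.map_apply (measurable_shiftT j) hs]; exact hPinv j s hs⟩
  -- step 4 : a.e. invariance under all shifts, by irreducibility
  have key : ∀ n (i : ZLat d), 0 < convPow (a 0) n i →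
      ∀ᵐ e ∂Pbar, (shiftT i e ∈ A1 ↔ e ∈ A1) := by
    intro n
    induction n with
    | zero =>
      intro i hi
      have hi0 : i = 0 := by
        by_contra h; simp [convPow, h] at hi
      subst hi0
      filter_upwards with e
      rw [shiftT_zero]
    | succ n ih =>
      intro i hi
      have hterm : ∃ j : ZLat d, 0 < convPow (a 0) n j * a 0 (i - j) := by
        by_contra h
        push_neg at h
        have hz : (fun j : ZLat d => convPow (a 0) n j * a 0 (i - j)) = fun _ => 0 := by
          funext j
          exact le_antisymm (h j)
            (mul_nonneg (convPow_nonneg (ha_nonneg 0) n j) (ha_nonneg 0 _))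
        have h0 : convPow (a 0) (n + 1) i = 0 := by
          show (∑' j : ZLat d, convPow (a 0) n j * a 0 (i - j)) = 0
          rw [hz]; exact tsum_zero
        linarith
      obtain ⟨j, hj⟩ := hterm
      have hcpn := convPow_nonneg (ha_nonneg 0) n j
      have han := ha_nonneg 0 (i - j)
      have hcp : 0 < convPow (a 0) n j := by
        rcases hcpn.lt_or_eq with h | h
        · exact h
        · exfalso; rw [← h, zero_mul] at hj; exact lt_irrefl 0 hj
      have haij : 0 < a 0 (i - j) := by
        rcases han.lt_or_eq with h | h
        · exact h
        · exfalso; rw [← h, mul_zero] at hj; exact lt_irrefl 0 hj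
      have h1 := ih j hcp
      have h2 := hstep (i - j) (hphat_pos _ haij)
      have h3 := (hMP j).quasiMeasurePreserving.ae h2
      filter_upwards [h1, h3] with e he1 he3
      rw [shiftT_comp, sub_add_cancel] at he3
      exact he3.trans he1
  have hInv : ∀ i : ZLat d, ∀ᵐ e ∂Pbar, (shiftT i e ∈ A1 ↔ e ∈ A1) := fun i => by
    obtain ⟨n, hn⟩ := ha_irr i
    exact key n i hn
  -- step 5 : build a strictly invariant version B of A1
  set B : Set (EnvSpace d K) := ⋂ j : ZLat d, shiftT j ⁻¹' A1 with hBdef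
  have hBm : MeasurableSet B := MeasurableSet.iInter fun j => (measurable_shiftT j) hA1m
  have hBinv : ∀ k : ZLat d, shiftT k ⁻¹' B = B := by
    intro k
    ext e
    simp only [hBdef, Set.mem_preimage, Set.mem_iInter]
    constructor
    · intro h j
      have := h (j - k)
      rwa [← Set.mem_preimage, ← Set.mem_preimage, ← Set.preimage_comp,
        show shiftT (d := d) (K := K) (j - k) ∘ shiftT k = shiftT j from
          funext fun e' => by rw [Function.comp_apply, shiftT_comp, sub_add_cancel]] at this
    · intro h j
      rw [← Set.mem_preimage, ← Set.mem_preimage, ← Set.preimage_comp,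
        show shiftT (d := d) (K := K) j ∘ shiftT k = shiftT (j + k) from
          funext fun e' => by rw [Function.comp_apply, shiftT_comp]]
      exact h (j + k)
  have hBsub : B ⊆ A1 := fun e h => by
    have := Set.mem_iInter.mp h 0
    rwa [Set.mem_preimage, shiftT_zero] at this
  have hBnull : Pbar (A1 \ B) = 0 := by
    have hsub : A1 \ B ⊆ ⋃ j : ZLat d, {e | ¬ (shiftT j e ∈ A1 ↔ e ∈ A1)} := by
      intro e he
      obtain ⟨he1, heB⟩ := he
      rw [hBdef, Set.mem_iInter] at heB
      push_neg at heB
      obtain ⟨j, hj⟩ := heB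
      exact Set.mem_iUnion.mpr ⟨j, fun hiff => hj (hiff.mpr he1)⟩
    refine measure_mono_null hsub (measure_iUnion_null fun j => ?_)
    have := hInv j
    rwa [ae_iff] at this
  have hPA1B : Pbar A1 = Pbar B := by
    refine le_antisymm ?_ (measure_mono hBsub)
    calc Pbar A1 ≤ Pbar (B ∪ (A1 \ B)) := measure_mono (fun e he => by
          by_cases h : e ∈ B
          · exact Or.inl h
          · exact Or.inr ⟨he, h⟩)
    _ ≤ Pbar B + Pbar (A1 \ B) := measure_union_le _ _
    _ = Pbar B := by rw [hBnull, add_zero]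
  have h01B := hPerg B hBm hBinv
  -- A0 has the same measure as A1
  have hA0A1 : Pbar A0 = Pbar A1 := measure_congr (eventuallyEq_set.mpr hA01)
  -- decomposition of A and its complement
  have hAdec : A = A1 ×ˢ ({true} : Set Bool) ∪ A0 ×ˢ ({false} : Set Bool) := by
    ext ⟨e, b⟩
    cases b
    · constructor
      · intro h; exact Or.inr ⟨h, rfl⟩
      · rintro (⟨_, hb⟩ | ⟨h, _⟩)
        · exact Bool.noConfusion hb
        · exact h
    · constructor
      · intro h; exact Or.inl ⟨h, rfl⟩
      · rintro (⟨h, _⟩ | ⟨_, hb⟩)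
        · exact h
        · exact Bool.noConfusion hb
  have hAcdec : Aᶜ = A1ᶜ ×ˢ ({true} : Set Bool) ∪ A0ᶜ ×ˢ ({false} : Set Bool) := by
    ext ⟨e, b⟩
    cases b
    · constructor
      · intro h; exact Or.inr ⟨h, rfl⟩
      · rintro (⟨_, hb⟩ | ⟨h, _⟩)
        · exact Bool.noConfusion hb
        · exact h
    · constructor
      · intro h; exact Or.inl ⟨h, rfl⟩
      · rintro (⟨h, _⟩ | ⟨_, hb⟩)
        · exact h
        · exact Bool.noConfusion hb
  have hdisj : ∀ S T : Set (EnvSpace d K),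
      Disjoint (S ×ˢ ({true} : Set Bool)) (T ×ˢ ({false} : Set Bool)) := by
    intro S T
    rw [Set.disjoint_left]
    rintro ⟨e, b⟩ ⟨_, hb⟩ ⟨_, hb'⟩
    simp only [Set.mem_singleton_iff] at hb hb'
    rw [hb] at hb'
    exact Bool.noConfusion hb'
  rcases h01B with hB0 | hB1
  · -- measure zero case
    left
    have hA10 : Pbar A1 = 0 := hPA1B.trans hB0
    have hA00 : Pbar A0 = 0 := hA0A1.trans hA10
    rw [hAdec, measure_union (hdisj A1 A0) (hA0m.prod (measurableSet_singleton _)),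
      hQ1 A1 hA1m, hQ0 A0 hA0m, hA10]
    have hint0 : ∫ e' in A0, Msize e' 0 / Nsize e' 0 ∂Pbar = 0 := by
      rw [Measure.restrict_eq_zero.mpr hA00, integral_zero_measure]
    rw [hint0]
    simp
  · -- measure one case
    right
    rw [← prob_compl_eq_zero_iff hA]
    have hA11 : Pbar A1 = 1 := hPA1B.trans hB1
    have hA1c : Pbar A1ᶜ = 0 := (prob_compl_eq_zero_iff hA1m).mpr hA11
    have hA0c : Pbar A0ᶜ = 0 := (prob_compl_eq_zero_iff hA0m).mpr (hA0A1.trans hA11)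
    rw [hAcdec, measure_union (hdisj A1ᶜ A0ᶜ) (hA0m.compl.prod (measurableSet_singleton _)),
      hQ1 _ hA1m.compl, hQ0 _ hA0m.compl, hA1c]
    have hint0 : ∫ e' in A0ᶜ, Msize e' 0 / Nsize e' 0 ∂Pbar = 0 := by
      rw [Measure.restrict_eq_zero.mpr hA0c, integral_zero_measure]
    rw [hint0]
    simp
end

section
/- If the migration kernel is symmetric, i.e. a(0,i) = a(0,−i) for all i ∈ ℤ^d, then Q is reversible for the environment process: for all bounded measurable functions f,g : Ω_𝔎 → ℝ, ∫_{Ω_𝔎} g·(Rf) dQ = ∫_{Ω_𝔎} f·(Rg) dQ. -/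
open MeasureTheory Filter

section RevAux

open Function

private lemma measurable_tsum_nat' {α : Type*} [MeasurableSpace α] {t : ℕ → α → ℝ}
    (hm : ∀ n, Measurable (t n)) (hs : ∀ x, Summable fun n => t n x) :
    Measurable fun x => ∑' n, t n x := by
  refine measurable_of_tendsto_metrizable (f := fun N x => ∑ n ∈ Finset.range N, t n x)
    (fun N => Finset.measurable_sum _ fun n _ => hm n) ?_
  rw [tendsto_pi_nhds]
  exact fun x => (hs x).hasSum.tendsto_sum_nat

private lemma measurable_tsum_countable {α ι : Type*} [MeasurableSpace α] [Countable ι]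
    {t : ι → α → ℝ} (hm : ∀ i, Measurable (t i)) (hs : ∀ x, Summable fun i => t i x) :
    Measurable fun x => ∑' i, t i x := by
  classical
  obtain ⟨e, he⟩ := Countable.exists_injective_nat ι
  have h1 : (fun x => ∑' i, t i x) = fun x => ∑' n, Function.extend e (fun i => t i x) 0 n := by
    funext x; exact (tsum_extend_zero he (fun i => t i x)).symm
  rw [h1]
  apply measurable_tsum_nat'
  · intro n
    by_cases h : ∃ i, e i = n
    · obtain ⟨i, rfl⟩ := h
      have h2 : (fun x => Function.extend e (fun i => t i x) 0 (e i)) = t i := by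
        funext x; rw [he.extend_apply]
      rw [h2]; exact hm i
    · have h2 : (fun x => Function.extend e (fun i => t i x) 0 n) = fun _ => (0:ℝ) := by
        funext x; rw [Function.extend_apply' _ _ _ h]; rfl
      rw [h2]; exact measurable_const
  · intro x
    exact (summable_extend_zero he).mpr (hs x)

private lemma revaux_measurable_shiftT {d K : ℕ} (j : ZLat d) :
    Measurable (shiftT (d := d) (K := K) j) :=
  measurable_pi_lambda _ fun i => measurable_pi_apply (i + j)

private lemma revaux_shiftT_neg {d K : ℕ} (j : ZLat d) (e : EnvSpace d K) :
    shiftT j (shiftT (-j) e) = e := by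
  funext i; simp [shiftT]

private lemma revaux_measurable_Nsize {d K : ℕ} (i : ZLat d) :
    Measurable fun e : EnvSpace d K => Nsize e i := by
  unfold Nsize
  exact (Measurable.of_discrete
    (f := fun p : Set.Icc (2:ℤ) (K:ℤ) × Set.Icc (2:ℤ) (K:ℤ) => (((p.1 : ℤ)) : ℝ))).comp
    (measurable_pi_apply i)

private lemma revaux_measurable_Msize {d K : ℕ} (i : ZLat d) :
    Measurable fun e : EnvSpace d K => Msize e i := by
  unfold Msize
  exact (Measurable.of_discrete
    (f := fun p : Set.Icc (2:ℤ) (K:ℤ) × Set.Icc (2:ℤ) (K:ℤ) => (((p.2 : ℤ)) : ℝ))).comp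
    (measurable_pi_apply i)

private lemma revaux_N2 {d K : ℕ} (e : EnvSpace d K) (i : ZLat d) : (2:ℝ) ≤ Nsize e i := by
  unfold Nsize; exact_mod_cast (e i).1.2.1

private lemma revaux_NK {d K : ℕ} (e : EnvSpace d K) (i : ZLat d) : Nsize e i ≤ K := by
  unfold Nsize; exact_mod_cast (e i).1.2.2

private lemma revaux_M2 {d K : ℕ} (e : EnvSpace d K) (i : ZLat d) : (2:ℝ) ≤ Msize e i := by
  unfold Msize; exact_mod_cast (e i).2.2.1

private lemma revaux_MK {d K : ℕ} (e : EnvSpace d K) (i : ZLat d) : Msize e i ≤ K := by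
  unfold Msize; exact_mod_cast (e i).2.2.2

private lemma revaux_integrable_of_bound {α : Type*} [MeasurableSpace α] {μ : Measure α}
    [IsFiniteMeasure μ] {h : α → ℝ} (hm : AEStronglyMeasurable h μ) (C : ℝ)
    (hb : ∀ x, |h x| ≤ C) : Integrable h μ :=
  (integrable_const C).mono' hm (Filter.Eventually.of_forall fun x => by
    simpa [Real.norm_eq_abs] using hb x)

end RevAux

set_option maxHeartbeats 2000000 in
/-- Reversibility of `Q` under symmetry of the migration kernel. -/
theorem reversibility_of_environment_process
    (d K : ℕ) (hd : 1 ≤ d) (hK : 2 ≤ K)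
    (a : ZLat d → ZLat d → ℝ) (lam : ℝ) (hlam : 0 < lam)
    (ha_nonneg : ∀ i j, 0 ≤ a i j)
    (ha_transl : ∀ i j, a i j = a 0 (j - i))
    (ha_irr : ∀ i : ZLat d, ∃ n : ℕ, 0 < convPow (a 0) n i)
    (ha_sum : Summable (a 0))
    (ha00 : 0 < a 0 0)
    (Pbar : Measure (EnvSpace d K)) [IsProbabilityMeasure Pbar]
    (hPinv : ∀ (j : ZLat d) (A : Set (EnvSpace d K)), MeasurableSet A →
      Pbar (shiftT j ⁻¹' A) = Pbar A)
    (hPerg : ∀ A : Set (EnvSpace d K), MeasurableSet A →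
      (∀ j : ZLat d, shiftT j ⁻¹' A = A) → Pbar A = 0 ∨ Pbar A = 1)
    (Q : Measure (EnvSpace d K × Bool)) [IsProbabilityMeasure Q]
    (hQ1 : ∀ A : Set (EnvSpace d K), MeasurableSet A →
      Q (A ×ˢ ({true} : Set Bool)) =
        ENNReal.ofReal (1 / (1 + ∫ e', Msize e' 0 / Nsize e' 0 ∂Pbar)) * Pbar A)
    (hQ0 : ∀ A : Set (EnvSpace d K), MeasurableSet A →
      Q (A ×ˢ ({false} : Set Bool)) =
        ENNReal.ofReal ((1 / (1 + ∫ e', Msize e' 0 / Nsize e' 0 ∂Pbar)) *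
          ∫ e' in A, Msize e' 0 / Nsize e' 0 ∂Pbar))
    (hsym : ∀ i : ZLat d, a 0 i = a 0 (-i)) :
    ∀ f g : EnvSpace d K × Bool → ℝ,
      Measurable f → (∃ C, ∀ x, |f x| ≤ C) →
      Measurable g → (∃ C, ∀ x, |g x| ≤ C) →
      ∫ x, g x * Rop a lam f x ∂Q = ∫ x, f x * Rop a lam g x ∂Q := by
  classical
  intro f g hf hfb hg hgb
  obtain ⟨Cf, hCf⟩ := hfb
  obtain ⟨Cg, hCg⟩ := hgb
  -- basic positivity facts
  have hc0 : 0 ≤ cRate a := tsum_nonneg fun i => by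
    by_cases h : i = 0 <;> simp [h, ha_nonneg]
  have hK2 : (2:ℝ) ≤ (K:ℝ) := by exact_mod_cast hK
  have hKpos : (0:ℝ) < K := by linarith
  have hlamK : 0 < lam * K := mul_pos hlam hKpos
  have hD1 : 0 < cRate a + lam + lam * K := by linarith
  have hD2 : 0 < cRate a + lam * K := by linarith
  have hq0 : 0 < qs a lam K := by unfold qs; exact div_pos hlam hD1
  have hq1 : qs a lam K ≤ 1 := by unfold qs; rw [div_le_one hD1]; linarith
  -- a point of the environment space
  have hKz : (2:ℤ) ≤ (K:ℤ) := by exact_mod_cast hK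
  have hmem : (2:ℤ) ∈ Set.Icc (2:ℤ) (K:ℤ) := Set.mem_Icc.mpr ⟨le_refl _, hKz⟩
  have hne : Nonempty (EnvSpace d K) := ⟨fun _ => (⟨2, hmem⟩, ⟨2, hmem⟩)⟩
  have hCf0 : 0 ≤ Cf := le_trans (abs_nonneg _) (hCf (hne.some, true))
  have hCg0 : 0 ≤ Cg := le_trans (abs_nonneg _) (hCg (hne.some, true))
  -- omega facts
  have hω0 : ∀ e : EnvSpace d K, 0 ≤ omegaE a lam e 0 := by
    intro e; unfold omegaE
    exact div_nonneg (mul_nonneg hlam.le (by linarith [revaux_N2 e 0]))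
      (mul_nonneg (by linarith [revaux_M2 e 0]) hD1.le)
  have hω1 : ∀ e : EnvSpace d K, omegaE a lam e 0 ≤ 1 := by
    intro e; unfold omegaE
    rw [div_le_one (by nlinarith [revaux_M2 e 0])]
    nlinarith [mul_le_mul_of_nonneg_left (revaux_NK e 0) hlam.le,
      mul_le_mul_of_nonneg_right (revaux_M2 e 0) hD1.le]
  -- w facts
  have hw0 : ∀ e : EnvSpace d K, 0 ≤ Msize e 0 / Nsize e 0 := fun e =>
    div_nonneg (by linarith [revaux_M2 e 0]) (by linarith [revaux_N2 e 0])
  have hwK : ∀ e : EnvSpace d K, Msize e 0 / Nsize e 0 ≤ K := by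
    intro e
    rw [div_le_iff₀ (by linarith [revaux_N2 e 0] : (0:ℝ) < Nsize e 0)]
    nlinarith [revaux_MK e 0, revaux_N2 e 0, hKpos.le]
  have hwω : ∀ e : EnvSpace d K, (Msize e 0 / Nsize e 0) * omegaE a lam e 0 = qs a lam K := by
    intro e
    have hN : Nsize e 0 ≠ 0 := by linarith [revaux_N2 e 0]
    have hM : Msize e 0 ≠ 0 := by linarith [revaux_M2 e 0]
    unfold omegaE qs
    field_simp
  have hwm : Measurable fun e : EnvSpace d K => Msize e 0 / Nsize e 0 :=
    (revaux_measurable_Msize 0).div (revaux_measurable_Nsize 0)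
  have hωm : Measurable fun e : EnvSpace d K => omegaE a lam e 0 := by
    unfold omegaE
    exact ((revaux_measurable_Nsize 0).const_mul lam).div
      ((revaux_measurable_Msize 0).mul_const _)
  -- phat facts
  have hupd : Summable (Function.update (a 0) 0 (lam * K)) := ha_sum.update 0 _
  have hphat_eq : ∀ j : ZLat d,
      phat a lam K j = Function.update (a 0) 0 (lam * K) j / (cRate a + lam * K) := by
    intro j
    unfold phat
    rw [Function.update_apply]
    by_cases h : j = 0 <;> simp [h]
  have hphat_sum : Summable (phat a lam K) :=
    (hupd.div_const _).congr fun j => (hphat_eq j).symm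
  have hphat_nonneg : ∀ j, 0 ≤ phat a lam K j := by
    intro j; unfold phat
    split
    · exact div_nonneg hlamK.le hD2.le
    · exact div_nonneg (ha_nonneg 0 j) hD2.le
  have hphat_tot : ∑' j : ZLat d, phat a lam K j = 1 := by
    have h1 : ∑' j : ZLat d, Function.update (a 0) 0 (lam * K) j = lam * K + cRate a := by
      rw [Summable.tsum_eq_add_tsum_ite hupd 0, Function.update_self]
      unfold cRate
      congr 1
      refine tsum_congr fun j => ?_
      by_cases h : j = 0 <;> simp [h, Function.update_apply]
    calc ∑' j : ZLat d, phat a lam K j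
        = ∑' j : ZLat d, Function.update (a 0) 0 (lam * K) j / (cRate a + lam * K) :=
          tsum_congr hphat_eq
      _ = (∑' j : ZLat d, Function.update (a 0) 0 (lam * K) j) / (cRate a + lam * K) := by
          rw [tsum_div_const]
      _ = 1 := by rw [h1, add_comm (lam * K) (cRate a)]; exact div_self hD2.ne'
  have hphat_neg : ∀ j : ZLat d, phat a lam K (-j) = phat a lam K j := by
    intro j
    unfold phat
    simp only [neg_eq_zero]
    rw [← hsym j]
  -- the jump part of the operator
  set Sop : (EnvSpace d K × Bool → ℝ) → EnvSpace d K → ℝ :=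
    fun F e => ∑' j : ZLat d, phat a lam K j * F (shiftT j e, true) with hSopdef
  have hι1 : Measurable fun e : EnvSpace d K => (e, true) :=
    measurable_id.prodMk measurable_const
  have hι0 : Measurable fun e : EnvSpace d K => (e, false) :=
    measurable_id.prodMk measurable_const
  have hS_summ : ∀ (F : EnvSpace d K × Bool → ℝ) (CF : ℝ), (∀ x, |F x| ≤ CF) →
      ∀ e : EnvSpace d K, Summable fun j : ZLat d => phat a lam K j * F (shiftT j e, true) := by
    intro F CF hFb e
    refine Summable.of_abs ?_
    refine Summable.of_nonneg_of_le (fun j => abs_nonneg _) (fun j => ?_) (hphat_sum.mul_right CF)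
    rw [abs_mul, abs_of_nonneg (hphat_nonneg j)]
    exact mul_le_mul_of_nonneg_left (hFb _) (hphat_nonneg j)
  have hS_meas : ∀ (F : EnvSpace d K × Bool → ℝ) (CF : ℝ), Measurable F → (∀ x, |F x| ≤ CF) →
      Measurable (Sop F) := by
    intro F CF hFm hFb
    rw [hSopdef]
    exact measurable_tsum_countable
      (t := fun (j : ZLat d) (e : EnvSpace d K) => phat a lam K j * F (shiftT j e, true))
      (fun j => (hFm.comp ((revaux_measurable_shiftT j).prodMk measurable_const)).const_mul _)
      (hS_summ F CF hFb)
  have hS_bound : ∀ (F : EnvSpace d K × Bool → ℝ) (CF : ℝ), (∀ x, |F x| ≤ CF) →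
      ∀ e : EnvSpace d K, |Sop F e| ≤ CF := by
    intro F CF hFb e
    have habs : Summable fun j : ZLat d => |phat a lam K j| * |F (shiftT j e, true)| := by
      refine Summable.of_nonneg_of_le
        (fun j => mul_nonneg (abs_nonneg _) (abs_nonneg _)) (fun j => ?_)
        (hphat_sum.mul_right CF)
      rw [abs_of_nonneg (hphat_nonneg j)]
      exact mul_le_mul_of_nonneg_left (hFb _) (hphat_nonneg j)
    have h1 : |Sop F e| ≤ ∑' j : ZLat d, |phat a lam K j| * |F (shiftT j e, true)| := by
      rw [hSopdef]
      simpa [Real.norm_eq_abs, abs_mul] using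
        norm_tsum_le_tsum_norm (f := fun j : ZLat d => phat a lam K j * F (shiftT j e, true))
          (by simpa [Real.norm_eq_abs, abs_mul] using habs)
    refine h1.trans ?_
    have h2 : ∑' j : ZLat d, |phat a lam K j| * |F (shiftT j e, true)|
        ≤ ∑' j : ZLat d, phat a lam K j * CF := by
      refine Summable.tsum_le_tsum (fun j => ?_) habs (hphat_sum.mul_right CF)
      rw [abs_of_nonneg (hphat_nonneg j)]
      exact mul_le_mul_of_nonneg_left (hFb _) (hphat_nonneg j)
    refine h2.trans ?_
    rw [tsum_mul_right, hphat_tot, one_mul]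
  -- pointwise values of Rop
  have hRt : ∀ (F : EnvSpace d K × Bool → ℝ) (e : EnvSpace d K),
      Rop a lam F (e, true) = qs a lam K * F (e, false) + (1 - qs a lam K) * Sop F e := by
    intro F e; rw [hSopdef]; rfl
  have hRfalse : ∀ (F : EnvSpace d K × Bool → ℝ) (e : EnvSpace d K),
      Rop a lam F (e, false)
        = omegaE a lam e 0 * F (e, true) + (1 - omegaE a lam e 0) * F (e, false) :=
    fun F e => rfl
  -- measurability and bound of Rop
  have hRop_eq : ∀ F : EnvSpace d K × Bool → ℝ, Rop a lam F = fun x =>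
      if x.2 = true then qs a lam K * F (x.1, false) + (1 - qs a lam K) * Sop F x.1
      else omegaE a lam x.1 0 * F (x.1, true) + (1 - omegaE a lam x.1 0) * F (x.1, false) := by
    intro F; funext x; rcases x with ⟨e, b⟩
    cases b
    · rw [hRfalse F e]; simp
    · rw [hRt F e]; simp
  have hRop_meas : ∀ (F : EnvSpace d K × Bool → ℝ) (CF : ℝ), Measurable F → (∀ x, |F x| ≤ CF) →
      Measurable (Rop a lam F) := by
    intro F CF hFm hFb
    rw [hRop_eq F]
    have hset : MeasurableSet {x : EnvSpace d K × Bool | x.2 = true} :=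
      measurable_snd (measurableSet_singleton true)
    refine Measurable.ite hset ?_ ?_
    · exact ((hFm.comp (measurable_fst.prodMk measurable_const)).const_mul _).add
        (((hS_meas F CF hFm hFb).comp measurable_fst).const_mul _)
    · exact ((hωm.comp measurable_fst).mul
          (hFm.comp (measurable_fst.prodMk measurable_const))).add
        ((measurable_const.sub (hωm.comp measurable_fst)).mul
          (hFm.comp (measurable_fst.prodMk measurable_const)))
  have hRop_bound : ∀ (F : EnvSpace d K × Bool → ℝ) (CF : ℝ), (∀ x, |F x| ≤ CF) →
      ∀ x, |Rop a lam F x| ≤ CF := by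
    intro F CF hFb x
    have hCF0 : 0 ≤ CF := le_trans (abs_nonneg _) (hFb x)
    rcases x with ⟨e, b⟩
    cases b
    · rw [hRfalse F e]
      refine (abs_add_le _ _).trans ?_
      rw [abs_mul, abs_mul, abs_of_nonneg (hω0 e),
        abs_of_nonneg (by linarith [hω1 e] : (0:ℝ) ≤ 1 - omegaE a lam e 0)]
      nlinarith [mul_le_mul_of_nonneg_left (hFb (e, true)) (hω0 e),
        mul_le_mul_of_nonneg_left (hFb (e, false))
          (by linarith [hω1 e] : (0:ℝ) ≤ 1 - omegaE a lam e 0)]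
    · rw [hRt F e]
      refine (abs_add_le _ _).trans ?_
      rw [abs_mul, abs_mul, abs_of_nonneg hq0.le,
        abs_of_nonneg (by linarith : (0:ℝ) ≤ 1 - qs a lam K)]
      nlinarith [mul_le_mul_of_nonneg_left (hFb (e, false)) hq0.le,
        mul_le_mul_of_nonneg_left (hS_bound F CF hFb e)
          (by linarith : (0:ℝ) ≤ 1 - qs a lam K), abs_nonneg (Sop F e),
        (abs_le.mp (hS_bound F CF hFb e)).2, (abs_le.mp (hS_bound F CF hFb e)).1]
  -- decomposition of integrals over Q
  have hρ0 : 0 ≤ ∫ e', Msize e' 0 / Nsize e' 0 ∂Pbar := integral_nonneg fun e => hw0 e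
  have h1ρ : (0:ℝ) < 1 + ∫ e', Msize e' 0 / Nsize e' 0 ∂Pbar := by linarith
  set c1 : ℝ := 1 / (1 + ∫ e', Msize e' 0 / Nsize e' 0 ∂Pbar) with hc1def
  have hc10 : 0 ≤ c1 := by rw [hc1def]; exact (div_pos one_pos h1ρ).le
  have hwint : ∀ A : Set (EnvSpace d K), MeasurableSet A →
      Integrable (fun e => Msize e 0 / Nsize e 0) (Pbar.restrict A) := fun A hA =>
    revaux_integrable_of_bound hwm.aestronglyMeasurable K
      (fun e => by rw [abs_of_nonneg (hw0 e)]; exact hwK e)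
  set ν : Measure (EnvSpace d K) :=
    Pbar.withDensity (fun e => (Real.toNNReal (Msize e 0 / Nsize e 0) : ENNReal)) with hνdef
  have hslice : ∀ (S : Set (EnvSpace d K × Bool)) (b : Bool),
      S ∩ (Set.univ ×ˢ ({b} : Set Bool)) = ((fun e => (e, b)) ⁻¹' S) ×ˢ ({b} : Set Bool) := by
    intro S b
    ext ⟨e, b'⟩
    simp only [Set.mem_inter_iff, Set.mem_prod, Set.mem_univ, true_and,
      Set.mem_singleton_iff, Set.mem_preimage]
    constructor
    · rintro ⟨h1, rfl⟩; exact ⟨h1, rfl⟩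
    · rintro ⟨h1, rfl⟩; exact ⟨h1, rfl⟩
  have hQtrue : Q.restrict (Set.univ ×ˢ ({true} : Set Bool))
      = (ENNReal.ofReal c1 • Pbar).map (fun e => (e, true)) := by
    refine Measure.ext fun S hS => ?_
    rw [Measure.restrict_apply hS, hslice S true, hQ1 _ (hι1 hS),
      Measure.map_apply hι1 hS, Measure.smul_apply, smul_eq_mul]
  have hνapply : ∀ A : Set (EnvSpace d K), MeasurableSet A →
      ν A = ENNReal.ofReal (∫ e in A, Msize e 0 / Nsize e 0 ∂Pbar) := by
    intro A hA
    have h := ofReal_integral_eq_lintegral_ofReal (hwint A hA)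
      (Filter.Eventually.of_forall fun e => hw0 e)
    rw [hνdef, withDensity_apply _ hA]
    exact h.symm
  have hQfalse : Q.restrict (Set.univ ×ˢ ({false} : Set Bool))
      = (ENNReal.ofReal c1 • ν).map (fun e => (e, false)) := by
    refine Measure.ext fun S hS => ?_
    rw [Measure.restrict_apply hS, hslice S false, hQ0 _ (hι0 hS),
      Measure.map_apply hι0 hS, Measure.smul_apply, smul_eq_mul,
      hνapply _ (hι0 hS), ← ENNReal.ofReal_mul hc10]
  have hmembT : MeasurableSet ((Set.univ : Set (EnvSpace d K)) ×ˢ ({true} : Set Bool)) :=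
    MeasurableSet.univ.prod (measurableSet_singleton _)
  have hcompl : ((Set.univ : Set (EnvSpace d K)) ×ˢ ({true} : Set Bool))ᶜ
      = (Set.univ : Set (EnvSpace d K)) ×ˢ ({false} : Set Bool) := by
    ext ⟨e, b⟩; cases b <;> simp
  have hwm' : Measurable fun e : EnvSpace d K => Real.toNNReal (Msize e 0 / Nsize e 0) :=
    hwm.real_toNNReal
  have hdecomp : ∀ (h : EnvSpace d K × Bool → ℝ) (C : ℝ), Measurable h → (∀ x, |h x| ≤ C) →
      ∫ x, h x ∂Q = c1 * ((∫ e, h (e, true) ∂Pbar)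
        + ∫ e, (Msize e 0 / Nsize e 0) * h (e, false) ∂Pbar) := by
    intro h C hm hb
    have hint : Integrable h Q := revaux_integrable_of_bound hm.aestronglyMeasurable C hb
    have h1 : ∫ x in Set.univ ×ˢ ({true} : Set Bool), h x ∂Q = c1 * ∫ e, h (e, true) ∂Pbar := by
      rw [hQtrue, integral_map hι1.aemeasurable hm.aestronglyMeasurable,
        integral_smul_measure, ENNReal.toReal_ofReal hc10, smul_eq_mul]
    have h0 : ∫ x in Set.univ ×ˢ ({false} : Set Bool), h x ∂Q
        = c1 * ∫ e, (Msize e 0 / Nsize e 0) * h (e, false) ∂Pbar := by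
      rw [hQfalse, integral_map hι0.aemeasurable hm.aestronglyMeasurable,
        integral_smul_measure, ENNReal.toReal_ofReal hc10, smul_eq_mul, hνdef,
        integral_withDensity_eq_integral_smul hwm' _]
      congr 1
      refine integral_congr_ae (Filter.Eventually.of_forall fun e => ?_)
      simp only [NNReal.smul_def]
      rw [Real.coe_toNNReal _ (hw0 e), smul_eq_mul]
    calc ∫ x, h x ∂Q = (∫ x in Set.univ ×ˢ ({true} : Set Bool), h x ∂Q)
          + ∫ x in (Set.univ ×ˢ ({true} : Set Bool))ᶜ, h x ∂Q :=
        (integral_add_compl hmembT hint).symm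
      _ = _ := by rw [hcompl, h1, h0]; ring
  -- expansion of the "true" part
  have htrue : ∀ (F G : EnvSpace d K × Bool → ℝ) (CF CG : ℝ), Measurable F → Measurable G →
      (∀ x, |F x| ≤ CF) → (∀ x, |G x| ≤ CG) →
      ∫ e, G (e, true) * Rop a lam F (e, true) ∂Pbar
        = qs a lam K * ∫ e, G (e, true) * F (e, false) ∂Pbar
          + (1 - qs a lam K) * ∫ e, G (e, true) * Sop F e ∂Pbar := by
    intro F G CF CG hFm hGm hFb hGb
    have hCF0' : 0 ≤ CF := le_trans (abs_nonneg _) (hFb (hne.some, true))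
    have hCG0' : 0 ≤ CG := le_trans (abs_nonneg _) (hGb (hne.some, true))
    have hint1 : Integrable (fun e => G (e, true) * F (e, false)) Pbar :=
      revaux_integrable_of_bound ((hGm.comp hι1).mul (hFm.comp hι0)).aestronglyMeasurable
        (CG * CF) (fun e => by
          rw [abs_mul]; exact mul_le_mul (hGb _) (hFb _) (abs_nonneg _) hCG0')
    have hint2 : Integrable (fun e => G (e, true) * Sop F e) Pbar :=
      revaux_integrable_of_bound
        ((hGm.comp hι1).mul (hS_meas F CF hFm hFb)).aestronglyMeasurable
        (CG * CF) (fun e => by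
          rw [abs_mul]; exact mul_le_mul (hGb _) (hS_bound F CF hFb e) (abs_nonneg _) hCG0')
    calc ∫ e, G (e, true) * Rop a lam F (e, true) ∂Pbar
        = ∫ e, (qs a lam K * (G (e, true) * F (e, false))
            + (1 - qs a lam K) * (G (e, true) * Sop F e)) ∂Pbar := by
          refine integral_congr_ae (Filter.Eventually.of_forall fun e => ?_)
          beta_reduce
          rw [hRt F e]; ring
      _ = _ := by
          rw [integral_add (hint1.const_mul _) (hint2.const_mul _),
            integral_const_mul, integral_const_mul]
  -- expansion of the "false" part
  have hfalse : ∀ (F G : EnvSpace d K × Bool → ℝ) (CF CG : ℝ), Measurable F → Measurable G →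
      (∀ x, |F x| ≤ CF) → (∀ x, |G x| ≤ CG) →
      ∫ e, (Msize e 0 / Nsize e 0) * (G (e, false) * Rop a lam F (e, false)) ∂Pbar
        = qs a lam K * ∫ e, G (e, false) * F (e, true) ∂Pbar
          + ∫ e, (Msize e 0 / Nsize e 0 * (1 - omegaE a lam e 0))
              * (G (e, false) * F (e, false)) ∂Pbar := by
    intro F G CF CG hFm hGm hFb hGb
    have hCF0' : 0 ≤ CF := le_trans (abs_nonneg _) (hFb (hne.some, true))
    have hCG0' : 0 ≤ CG := le_trans (abs_nonneg _) (hGb (hne.some, true))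
    have hint1 : Integrable (fun e => G (e, false) * F (e, true)) Pbar :=
      revaux_integrable_of_bound ((hGm.comp hι0).mul (hFm.comp hι1)).aestronglyMeasurable
        (CG * CF) (fun e => by
          rw [abs_mul]; exact mul_le_mul (hGb _) (hFb _) (abs_nonneg _) hCG0')
    have hint2 : Integrable (fun e => (Msize e 0 / Nsize e 0 * (1 - omegaE a lam e 0))
        * (G (e, false) * F (e, false))) Pbar := by
      refine revaux_integrable_of_bound
        (((hwm.mul (measurable_const.sub hωm)).mul
          ((hGm.comp hι0).mul (hFm.comp hι0))).aestronglyMeasurable)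
        ((K : ℝ) * (CG * CF)) (fun e => ?_)
      rw [abs_mul]
      refine mul_le_mul ?_ (by
        rw [abs_mul]; exact mul_le_mul (hGb _) (hFb _) (abs_nonneg _) hCG0')
        (abs_nonneg _) hKpos.le
      rw [abs_mul, abs_of_nonneg (hw0 e),
        abs_of_nonneg (by linarith [hω1 e] : (0:ℝ) ≤ 1 - omegaE a lam e 0)]
      calc Msize e 0 / Nsize e 0 * (1 - omegaE a lam e 0) ≤ (K : ℝ) * 1 :=
          mul_le_mul (hwK e) (by linarith [hω0 e]) (by linarith [hω1 e]) hKpos.le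
        _ = (K : ℝ) := mul_one _
    calc ∫ e, (Msize e 0 / Nsize e 0) * (G (e, false) * Rop a lam F (e, false)) ∂Pbar
        = ∫ e, (qs a lam K * (G (e, false) * F (e, true))
            + (Msize e 0 / Nsize e 0 * (1 - omegaE a lam e 0))
              * (G (e, false) * F (e, false))) ∂Pbar := by
          refine integral_congr_ae (Filter.Eventually.of_forall fun e => ?_)
          beta_reduce
          rw [hRfalse F e]
          linear_combination (G (e, false) * F (e, true)) * hwω e
      _ = _ := by
          rw [integral_add (hint1.const_mul _) hint2, integral_const_mul]
  -- translation invariance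
  have hmap : ∀ k : ZLat d, Pbar.map (shiftT (K := K) k) = Pbar := by
    intro k
    refine Measure.ext fun A hA => ?_
    rw [Measure.map_apply (revaux_measurable_shiftT k) hA, hPinv k A hA]
  have hshift_int : ∀ (φ : EnvSpace d K → ℝ), Measurable φ → ∀ k : ZLat d,
      ∫ e, φ (shiftT k e) ∂Pbar = ∫ e, φ e ∂Pbar := by
    intro φ hφ k
    conv_rhs => rw [← hmap k]
    rw [integral_map (revaux_measurable_shiftT k).aemeasurable hφ.aestronglyMeasurable]
  have hswap : ∀ j : ZLat d,
      ∫ e, g (e, true) * f (shiftT j e, true) ∂Pbar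
        = ∫ e, f (e, true) * g (shiftT (-j) e, true) ∂Pbar := by
    intro j
    have hφ : Measurable fun e : EnvSpace d K => g (e, true) * f (shiftT j e, true) :=
      (hg.comp hι1).mul (hf.comp ((revaux_measurable_shiftT j).prodMk measurable_const))
    calc ∫ e, g (e, true) * f (shiftT j e, true) ∂Pbar
        = ∫ e, g (shiftT (-j) e, true) * f (shiftT j (shiftT (-j) e), true) ∂Pbar :=
          (hshift_int _ hφ (-j)).symm
      _ = ∫ e, f (e, true) * g (shiftT (-j) e, true) ∂Pbar := by
          refine integral_congr_ae (Filter.Eventually.of_forall fun e => ?_)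
          beta_reduce
          rw [revaux_shiftT_neg j e]; ring
  -- interchange of sum and integral
  have hinter : ∀ (F G : EnvSpace d K × Bool → ℝ) (CF CG : ℝ), Measurable F → Measurable G →
      (∀ x, |F x| ≤ CF) → (∀ x, |G x| ≤ CG) →
      ∫ e, G (e, true) * Sop F e ∂Pbar
        = ∑' j : ZLat d, phat a lam K j * ∫ e, G (e, true) * F (shiftT j e, true) ∂Pbar := by
    intro F G CF CG hFm hGm hFb hGb
    have hCF0' : 0 ≤ CF := le_trans (abs_nonneg _) (hFb (hne.some, true))
    have hCG0' : 0 ≤ CG := le_trans (abs_nonneg _) (hGb (hne.some, true))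
    have hfin : ∑' j : ZLat d,
        ∫⁻ e, ‖G (e, true) * (phat a lam K j * F (shiftT j e, true))‖₊ ∂Pbar ≠ ⊤ := by
      have hb : ∀ j : ZLat d,
          (∫⁻ e, ‖G (e, true) * (phat a lam K j * F (shiftT j e, true))‖₊ ∂Pbar)
            ≤ ENNReal.ofReal (CG * CF * phat a lam K j) := by
        intro j
        have hpt : ∀ e, (‖G (e, true) * (phat a lam K j * F (shiftT j e, true))‖₊ : ENNReal)
            ≤ ENNReal.ofReal (CG * CF * phat a lam K j) := by
          intro e
          rw [← enorm_eq_nnnorm, ← ofReal_norm]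
          apply ENNReal.ofReal_le_ofReal
          rw [Real.norm_eq_abs, abs_mul, abs_mul, abs_of_nonneg (hphat_nonneg j)]
          calc |G (e, true)| * (phat a lam K j * |F (shiftT j e, true)|)
              ≤ CG * (phat a lam K j * CF) :=
                mul_le_mul (hGb _) (mul_le_mul_of_nonneg_left (hFb _) (hphat_nonneg j))
                  (mul_nonneg (hphat_nonneg j) (abs_nonneg _)) hCG0'
            _ = CG * CF * phat a lam K j := by ring
        calc ∫⁻ e, ‖G (e, true) * (phat a lam K j * F (shiftT j e, true))‖₊ ∂Pbar
            ≤ ∫⁻ _, ENNReal.ofReal (CG * CF * phat a lam K j) ∂Pbar := lintegral_mono hpt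
          _ = ENNReal.ofReal (CG * CF * phat a lam K j) := by
              rw [lintegral_const, measure_univ, mul_one]
      refine ne_of_lt (lt_of_le_of_lt (ENNReal.tsum_le_tsum hb) ?_)
      have hsum2 : Summable fun j : ZLat d => CG * CF * phat a lam K j := hphat_sum.mul_left _
      rw [← ENNReal.ofReal_tsum_of_nonneg
        (fun j => mul_nonneg (mul_nonneg hCG0' hCF0') (hphat_nonneg j)) hsum2]
      exact ENNReal.ofReal_lt_top
    calc ∫ e, G (e, true) * Sop F e ∂Pbar
        = ∫ e, ∑' j : ZLat d, G (e, true) * (phat a lam K j * F (shiftT j e, true)) ∂Pbar := by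
          refine integral_congr_ae (Filter.Eventually.of_forall fun e => ?_)
          beta_reduce
          rw [hSopdef]
          exact (tsum_mul_left).symm
      _ = ∑' j : ZLat d, ∫ e, G (e, true) * (phat a lam K j * F (shiftT j e, true)) ∂Pbar := by
          refine integral_tsum (fun j => ?_) hfin
          exact ((hGm.comp hι1).mul
            ((hFm.comp ((revaux_measurable_shiftT j).prodMk measurable_const)).const_mul
              _)).aestronglyMeasurable
      _ = ∑' j : ZLat d, phat a lam K j * ∫ e, G (e, true) * F (shiftT j e, true) ∂Pbar := by
          refine tsum_congr fun j => ?_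
          rw [← integral_const_mul]
          refine integral_congr_ae (Filter.Eventually.of_forall fun e => ?_)
          ring
  -- the key symmetry
  have hkey : ∫ e, g (e, true) * Sop f e ∂Pbar = ∫ e, f (e, true) * Sop g e ∂Pbar := by
    rw [hinter f g Cf Cg hf hg hCf hCg, hinter g f Cg Cf hg hf hCg hCf]
    rw [← (Equiv.neg (ZLat d)).tsum_eq
      (fun j => phat a lam K j * ∫ e, f (e, true) * g (shiftT j e, true) ∂Pbar)]
    refine tsum_congr fun j => ?_
    rw [Equiv.neg_apply, hphat_neg j, hswap j]
  -- assembling everything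
  have hRfm := hRop_meas f Cf hf hCf
  have hRfb := hRop_bound f Cf hCf
  have hRgm := hRop_meas g Cg hg hCg
  have hRgb := hRop_bound g Cg hCg
  have hGRf_m : Measurable fun x : EnvSpace d K × Bool => g x * Rop a lam f x := hg.mul hRfm
  have hGRf_b : ∀ x, |g x * Rop a lam f x| ≤ Cg * Cf := fun x => by
    rw [abs_mul]; exact mul_le_mul (hCg x) (hRfb x) (abs_nonneg _) hCg0
  have hFRg_m : Measurable fun x : EnvSpace d K × Bool => f x * Rop a lam g x := hf.mul hRgm
  have hFRg_b : ∀ x, |f x * Rop a lam g x| ≤ Cf * Cg := fun x => by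
    rw [abs_mul]; exact mul_le_mul (hCf x) (hRgb x) (abs_nonneg _) hCf0
  calc ∫ x, g x * Rop a lam f x ∂Q
      = c1 * ((∫ e, g (e, true) * Rop a lam f (e, true) ∂Pbar)
          + ∫ e, (Msize e 0 / Nsize e 0) * (g (e, false) * Rop a lam f (e, false)) ∂Pbar) :=
        hdecomp _ (Cg * Cf) hGRf_m hGRf_b
    _ = c1 * ((∫ e, f (e, true) * Rop a lam g (e, true) ∂Pbar)
          + ∫ e, (Msize e 0 / Nsize e 0) * (f (e, false) * Rop a lam g (e, false)) ∂Pbar) := by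
        have h1 := htrue f g Cf Cg hf hg hCf hCg
        have h2 := htrue g f Cg Cf hg hf hCg hCf
        have h3 := hfalse f g Cf Cg hf hg hCf hCg
        have h4 := hfalse g f Cg Cf hg hf hCg hCf
        have hcA : ∫ e, f (e, true) * g (e, false) ∂Pbar
            = ∫ e, g (e, false) * f (e, true) ∂Pbar :=
          integral_congr_ae (Filter.Eventually.of_forall fun e => mul_comm _ _)
        have hcB : ∫ e, g (e, true) * f (e, false) ∂Pbar
            = ∫ e, f (e, false) * g (e, true) ∂Pbar :=
          integral_congr_ae (Filter.Eventually.of_forall fun e => mul_comm _ _)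
        have hcC : ∫ e, (Msize e 0 / Nsize e 0 * (1 - omegaE a lam e 0))
              * (g (e, false) * f (e, false)) ∂Pbar
            = ∫ e, (Msize e 0 / Nsize e 0 * (1 - omegaE a lam e 0))
              * (f (e, false) * g (e, false)) ∂Pbar :=
          integral_congr_ae (Filter.Eventually.of_forall fun e => by ring)
        rw [h1, h2, h3, h4, hkey, hcA, hcB, hcC]
        ring
    _ = ∫ x, f x * Rop a lam g x ∂Q := (hdecomp _ (Cf * Cg) hFRg_m hFRg_b).symm
end
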